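/- Let A ∈ ℝ^{n×n} satisfy x^T Q A x ≤ 0 for all x ∈ ℝ^n, where Q ∈ ℝ^{n×n} is symmetric positive definite. Let V ∈ ℝ^{n×r} have full column rank and define the Galerkin-projected matrix A_r = (V^T Q V)^{-1} V^T Q A V. Then the reduced system ẋ_r = A_r x_r is Lyapunov stable with Lyapunov function x_r ↦ x_r^T (V^T Q V) x_r, i.e. x_r^T (V^T Q V) A_r x_r ≤ 0 for all x_r ∈ ℝ^r. -/

import Mathlib

open Matrix

theorem stmt_8 (n r : ℕ) (A : Matrix (Fin n) (Fin n) ℝ)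
    (Q : Matrix (Fin n) (Fin n) ℝ) (hQ : Q.PosDef)
    (hstab : ∀ x : Fin n → ℝ, x ⬝ᵥ (Q *ᵥ (A *ᵥ x)) ≤ 0)
    (V : Matrix (Fin n) (Fin r) ℝ) (hV : V.rank = r)
    (A_r : Matrix (Fin r) (Fin r) ℝ)
    (hAr : A_r = (Vᵀ * Q * V)⁻¹ * (Vᵀ * Q * A * V)) :
    ∀ x_r : Fin r → ℝ, x_r ⬝ᵥ ((Vᵀ * Q * V) *ᵥ (A_r *ᵥ x_r)) ≤ 0 := by
  -- V has injective mulVec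
  have hinj : Function.Injective V.mulVecLin := by
    rw [← LinearMap.ker_eq_bot]
    have h := LinearMap.finrank_range_add_finrank_ker V.mulVecLin
    rw [show Module.finrank ℝ (LinearMap.range V.mulVecLin) = V.rank from rfl] at h
    rw [hV, Module.finrank_pi, Fintype.card_fin] at h
    have : Module.finrank ℝ (LinearMap.ker V.mulVecLin) = 0 := by omega
    exact Submodule.finrank_eq_zero.mp this
  have hM : (Vᵀ * Q * V).PosDef := by
    refine posDef_iff_dotProduct_mulVec.mpr ⟨?_, ?_⟩
    · have h := (hQ.posSemidef.conjTranspose_mul_mul_same V).isHermitian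
      simpa [Matrix.conjTranspose_eq_transpose_of_trivial] using h
    · intro x hx
      have hVx : V *ᵥ x ≠ 0 := by
        intro h
        exact hx (hinj (by simpa using h))
      have h := hQ.dotProduct_mulVec_pos hVx
      rw [star_trivial] at h ⊢
      rwa [← Matrix.mulVec_mulVec, ← Matrix.mulVec_mulVec,
        Matrix.dotProduct_mulVec, Matrix.vecMul_transpose]
  intro x
  have hMA : (Vᵀ * Q * V) * A_r = Vᵀ * Q * A * V := by
    rw [hAr, Matrix.mul_nonsing_inv_cancel_left _ _ (Matrix.isUnit_iff_isUnit_det _ |>.mp hM.isUnit)]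
  rw [Matrix.mulVec_mulVec, hMA, ← Matrix.mulVec_mulVec, ← Matrix.mulVec_mulVec,
    ← Matrix.mulVec_mulVec, Matrix.dotProduct_mulVec, Matrix.vecMul_transpose]
  exact hstab _
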